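/- arXiv:2209.03491 — 5 statements merged into one kernel-verified Lean document; each statement's English description precedes it below -/
import Mathlib

section
/- Let X, U be finite sets, P : X × U × P(X) × P(U) → P(X) a transition kernel satisfying the Lipschitz bound |P(x,u,μ₁,ν₁) − P(x,u,μ₂,ν₂)|₁ ≤ L_P (|μ₁−μ₂|₁ + |ν₁−ν₂|₁) for all x, u, μᵢ, νᵢ. Define ν^MF(μ,π)(u) = Σ_x π(x,μ)(u) μ(x) and P^MF(μ,π)(y) = Σ_x Σ_u P(x,u,μ,ν^MF(μ,π))(y) π(x,μ)(u) μ(x). Then for any μ, μ̄ ∈ P(X) and policies π, π̄: |P^MF(μ,π) − P^MF(μ̄,π̄)|₁ ≤ (1 + 2L_P)|μ − μ̄|₁ + (1 + L_P) sup_{x∈X} |π(x,μ) − π̄(x,μ̄)|₁. -/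
open Finset

def IsPmf {X : Type*} [Fintype X] (μ : X → ℝ) : Prop :=
  (∀ x, 0 ≤ μ x) ∧ ∑ x, μ x = 1

noncomputable def l1 {X : Type*} [Fintype X] (f : X → ℝ) : ℝ := ∑ x, |f x|

/-- The mean-field action distribution `ν^MF(μ, π)`. -/
noncomputable def nuMF {X U : Type*} [Fintype X] [Fintype U]
    (μ : X → ℝ) (π : X → (X → ℝ) → U → ℝ) : U → ℝ :=
  fun u => ∑ x, π x μ u * μ x

/-- The one-step mean-field state distribution update `P^MF(μ, π)`. -/
noncomputable def PMF' {X U : Type*} [Fintype X] [Fintype U]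
    (P : X → U → (X → ℝ) → (U → ℝ) → X → ℝ)
    (μ : X → ℝ) (π : X → (X → ℝ) → U → ℝ) : X → ℝ :=
  fun y => ∑ x, ∑ u, P x u μ (nuMF μ π) y * π x μ u * μ x

lemma nuMF_pmf {X U : Type*} [Fintype X] [Fintype U]
    (μ : X → ℝ) (π : X → (X → ℝ) → U → ℝ) (hμ : IsPmf μ)
    (hπ : ∀ x ν, IsPmf ν → IsPmf (π x ν)) : IsPmf (nuMF μ π) := by
  constructor
  · intro u
    exact Finset.sum_nonneg fun x _ => mul_nonneg ((hπ x μ hμ).1 u) (hμ.1 x)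
  · unfold nuMF
    rw [Finset.sum_comm]
    calc ∑ x, ∑ u, π x μ u * μ x = ∑ x : X, μ x := by
          refine Finset.sum_congr rfl fun x _ => ?_
          rw [← Finset.sum_mul, (hπ x μ hμ).2, one_mul]
      _ = 1 := hμ.2

/-- Lemma 2: Lipschitz continuity of `P^MF`. -/
theorem PMF_lipschitz {X U : Type*} [Fintype X] [Fintype U]
    (L_P : ℝ) (hLP : 0 < L_P)
    (P : X → U → (X → ℝ) → (U → ℝ) → X → ℝ)
    (hP : ∀ x u μ ν, IsPmf μ → IsPmf ν → IsPmf (P x u μ ν))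
    (hPLip : ∀ x u μ₁ μ₂ ν₁ ν₂, IsPmf μ₁ → IsPmf μ₂ → IsPmf ν₁ → IsPmf ν₂ →
      l1 (fun y => P x u μ₁ ν₁ y - P x u μ₂ ν₂ y)
        ≤ L_P * (l1 (fun x' => μ₁ x' - μ₂ x') + l1 (fun u' => ν₁ u' - ν₂ u')))
    (μ μ' : X → ℝ) (hμ : IsPmf μ) (hμ' : IsPmf μ')
    (π π' : X → (X → ℝ) → U → ℝ)
    (hπ : ∀ x ν, IsPmf ν → IsPmf (π x ν))
    (hπ' : ∀ x ν, IsPmf ν → IsPmf (π' x ν)) :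
    l1 (fun y => PMF' P μ π y - PMF' P μ' π' y)
      ≤ (1 + 2 * L_P) * l1 (fun x => μ x - μ' x)
        + (1 + L_P) * ⨆ x, l1 (fun u => π x μ u - π' x μ' u) := by
  classical
  obtain ⟨hμ0, hμ1⟩ := hμ
  obtain ⟨hμ'0, hμ'1⟩ := hμ'
  have hμp : IsPmf μ := ⟨hμ0, hμ1⟩
  have hμ'p : IsPmf μ' := ⟨hμ'0, hμ'1⟩
  set ν := nuMF μ π with hν_def
  set ν' := nuMF μ' π' with hν'_def
  have hνp : IsPmf ν := nuMF_pmf μ π hμp hπ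
  have hν'p : IsPmf ν' := nuMF_pmf μ' π' hμ'p hπ'
  set Δμ := l1 (fun x => μ x - μ' x) with hΔμ_def
  set S := ⨆ x, l1 (fun u => π x μ u - π' x μ' u) with hS_def
  have hSle : ∀ x : X, l1 (fun u => π x μ u - π' x μ' u) ≤ S := fun x =>
    le_ciSup (f := fun x => l1 (fun u => π x μ u - π' x μ' u))
      (Set.Finite.bddAbove (Set.finite_range _)) x
  -- bound on l1 (ν - ν')
  have hΔν : l1 (fun u => ν u - ν' u) ≤ Δμ + S := by
    have step : ∀ u : U, |ν u - ν' u|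
        ≤ ∑ x, (|π x μ u - π' x μ' u| * μ x + π' x μ' u * |μ x - μ' x|) := by
      intro u
      have : ν u - ν' u = ∑ x, ((π x μ u - π' x μ' u) * μ x + π' x μ' u * (μ x - μ' x)) := by
        simp only [hν_def, hν'_def, nuMF, ← Finset.sum_sub_distrib]
        exact Finset.sum_congr rfl fun x _ => by ring
      rw [this]
      refine (Finset.abs_sum_le_sum_abs _ _).trans (Finset.sum_le_sum fun x _ => ?_)
      refine (abs_add_le _ _).trans ?_
      rw [abs_mul, abs_mul, abs_of_nonneg (hμ0 x), abs_of_nonneg ((hπ' x μ' hμ'p).1 u)]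
    calc l1 (fun u => ν u - ν' u)
        ≤ ∑ u, ∑ x, (|π x μ u - π' x μ' u| * μ x + π' x μ' u * |μ x - μ' x|) :=
          Finset.sum_le_sum fun u _ => step u
      _ = ∑ x, (∑ u, |π x μ u - π' x μ' u|) * μ x
          + ∑ x, (∑ u, π' x μ' u) * |μ x - μ' x| := by
          rw [Finset.sum_comm, ← Finset.sum_add_distrib]
          refine Finset.sum_congr rfl fun x _ => ?_
          rw [Finset.sum_add_distrib, Finset.sum_mul, Finset.sum_mul]
      _ ≤ ∑ x, S * μ x + ∑ x, (∑ u, π' x μ' u) * |μ x - μ' x| := by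
          gcongr with x hx
          · exact hμ0 x
          · exact hSle x
      _ = Δμ + S := by
          rw [← Finset.mul_sum, hμ1, mul_one]
          have : ∀ x : X, (∑ u, π' x μ' u) * |μ x - μ' x| = |μ x - μ' x| := fun x => by
            rw [(hπ' x μ' hμ'p).2, one_mul]
          rw [Finset.sum_congr rfl fun x _ => this x]
          simp [hΔμ_def, l1, add_comm]
  -- main decomposition
  have key : l1 (fun y => PMF' P μ π y - PMF' P μ' π' y)
      ≤ ∑ x, ∑ u, ((∑ y, |P x u μ ν y - P x u μ' ν' y|) * (π x μ u * μ x)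
          + (|π x μ u - π' x μ' u| * μ x + π' x μ' u * |μ x - μ' x|)) := by
    have hdiff : ∀ y : X, PMF' P μ π y - PMF' P μ' π' y
        = ∑ x, ∑ u, ((P x u μ ν y - P x u μ' ν' y) * (π x μ u * μ x)
            + P x u μ' ν' y * ((π x μ u - π' x μ' u) * μ x)
            + P x u μ' ν' y * (π' x μ' u * (μ x - μ' x))) := by
      intro y
      simp only [PMF', ← hν_def, ← hν'_def, ← Finset.sum_sub_distrib]
      exact Finset.sum_congr rfl fun x _ => Finset.sum_congr rfl fun u _ => by ring
    calc l1 (fun y => PMF' P μ π y - PMF' P μ' π' y)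
        ≤ ∑ y, ∑ x, ∑ u, (|P x u μ ν y - P x u μ' ν' y| * (π x μ u * μ x)
            + P x u μ' ν' y * (|π x μ u - π' x μ' u| * μ x)
            + P x u μ' ν' y * (π' x μ' u * |μ x - μ' x|)) := by
          refine Finset.sum_le_sum fun y _ => ?_
          show |PMF' P μ π y - PMF' P μ' π' y| ≤ _
          rw [hdiff y]
          refine (Finset.abs_sum_le_sum_abs _ _).trans (Finset.sum_le_sum fun x _ => ?_)
          refine (Finset.abs_sum_le_sum_abs _ _).trans (Finset.sum_le_sum fun u _ => ?_)
          have hP0 := (hP x u μ' ν' hμ'p hν'p).1 y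
          have hπ0 := (hπ x μ hμp).1 u
          have hπ'0 := (hπ' x μ' hμ'p).1 u
          refine (abs_add_le _ _).trans ?_
          gcongr
          · refine (abs_add_le _ _).trans ?_
            gcongr
            · rw [abs_mul, abs_of_nonneg (mul_nonneg hπ0 (hμ0 x))]
            · rw [abs_mul, abs_of_nonneg hP0, abs_mul, abs_of_nonneg (hμ0 x)]
          · rw [abs_mul, abs_of_nonneg hP0, abs_mul, abs_of_nonneg hπ'0]
      _ = ∑ x, ∑ u, ∑ y, (|P x u μ ν y - P x u μ' ν' y| * (π x μ u * μ x)
            + P x u μ' ν' y * (|π x μ u - π' x μ' u| * μ x)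
            + P x u μ' ν' y * (π' x μ' u * |μ x - μ' x|)) := by
          rw [Finset.sum_comm]
          exact Finset.sum_congr rfl fun x _ => Finset.sum_comm
      _ ≤ ∑ x, ∑ u, ((∑ y, |P x u μ ν y - P x u μ' ν' y|) * (π x μ u * μ x)
            + (|π x μ u - π' x μ' u| * μ x + π' x μ' u * |μ x - μ' x|)) := by
          refine Finset.sum_le_sum fun x _ => Finset.sum_le_sum fun u _ => le_of_eq ?_
          rw [Finset.sum_add_distrib, Finset.sum_add_distrib, ← Finset.sum_mul,
            ← Finset.sum_mul, ← Finset.sum_mul, (hP x u μ' ν' hμ'p hν'p).2]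
          ring
  -- bound the three pieces
  have hA : ∑ x, ∑ u, (∑ y, |P x u μ ν y - P x u μ' ν' y|) * (π x μ u * μ x)
      ≤ L_P * (Δμ + (Δμ + S)) := by
    have h1 : ∑ x, ∑ u, (∑ y, |P x u μ ν y - P x u μ' ν' y|) * (π x μ u * μ x)
        ≤ ∑ x, ∑ u, (L_P * (Δμ + (Δμ + S))) * (π x μ u * μ x) := by
      refine Finset.sum_le_sum fun x _ => Finset.sum_le_sum fun u _ => ?_
      refine mul_le_mul_of_nonneg_right ?_ (mul_nonneg ((hπ x μ hμp).1 u) (hμ0 x))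
      refine (hPLip x u μ μ' ν ν' hμp hμ'p hνp hν'p).trans ?_
      have := mul_le_mul_of_nonneg_left (add_le_add (le_refl Δμ) hΔν) hLP.le
      simpa [hΔμ_def] using this
    refine h1.trans_eq ?_
    have hw : ∑ x, ∑ u, π x μ u * μ x = 1 := by
      have h2 := (nuMF_pmf μ π hμp hπ).2
      simp only [nuMF] at h2
      rw [Finset.sum_comm]
      exact h2
    simp only [← Finset.mul_sum]
    rw [hw, mul_one]
  have hB : ∑ x, ∑ u, |π x μ u - π' x μ' u| * μ x ≤ S := by
    calc ∑ x, ∑ u, |π x μ u - π' x μ' u| * μ x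
        = ∑ x, (∑ u, |π x μ u - π' x μ' u|) * μ x := by
          exact Finset.sum_congr rfl fun x _ => (Finset.sum_mul _ _ _).symm
      _ ≤ ∑ x, S * μ x := by
          gcongr with x hx
          · exact hμ0 x
          · exact hSle x
      _ = S := by rw [← Finset.mul_sum, hμ1, mul_one]
  have hC : ∑ x, ∑ u, π' x μ' u * |μ x - μ' x| = Δμ := by
    calc ∑ x, ∑ u, π' x μ' u * |μ x - μ' x|
        = ∑ x, (∑ u, π' x μ' u) * |μ x - μ' x| := by
          exact Finset.sum_congr rfl fun x _ => (Finset.sum_mul _ _ _).symm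
      _ = ∑ x, |μ x - μ' x| := by
          refine Finset.sum_congr rfl fun x _ => ?_
          rw [(hπ' x μ' hμ'p).2, one_mul]
      _ = Δμ := rfl
  have hsplit : ∑ x, ∑ u, ((∑ y, |P x u μ ν y - P x u μ' ν' y|) * (π x μ u * μ x)
          + (|π x μ u - π' x μ' u| * μ x + π' x μ' u * |μ x - μ' x|))
      = (∑ x, ∑ u, (∑ y, |P x u μ ν y - P x u μ' ν' y|) * (π x μ u * μ x))
        + ((∑ x, ∑ u, |π x μ u - π' x μ' u| * μ x)
          + ∑ x, ∑ u, π' x μ' u * |μ x - μ' x|) := by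
    simp [Finset.sum_add_distrib]
  have := key.trans_eq hsplit
  linarith [hA, hB, hC.le, hC.ge]
end

section
/- Let M, N be positive integers and for each m ∈ {1,…,M}, let {X_{mn}}_{n=1}^N be a family of random variables taking values in [0,1] such that for each fixed m the variables X_{m1},…,X_{mN} are mutually independent, and for every n, Σ_{m=1}^M E[X_{mn}] ≤ 1. Then Σ_{m=1}^M E| Σ_{n=1}^N (X_{mn} − E[X_{mn}]) | ≤ √(MN). -/
open MeasureTheory ProbabilityTheory Finset

lemma my_integral_abs_le_sqrt_integral_sq {Ω : Type*} [MeasureSpace Ω]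
    [IsProbabilityMeasure (ℙ : Measure Ω)] {Y : Ω → ℝ} (hY : MemLp Y 2 ℙ) :
    ∫ ω, |Y ω| ≤ Real.sqrt (∫ ω, (Y ω) ^ 2) := by
  have hconj : (2 : ℝ).HolderConjugate 2 := Real.holderConjugate_iff.mpr ⟨one_lt_two, by norm_num⟩
  have h2 : ENNReal.ofReal (2 : ℝ) = 2 := by norm_num
  have h := integral_mul_le_Lp_mul_Lq_of_nonneg (μ := ℙ) hconj
    (f := fun ω => |Y ω|) (g := fun _ => (1 : ℝ))
    (ae_of_all _ fun ω => abs_nonneg _) (ae_of_all _ fun _ => zero_le_one)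
    (h2 ▸ hY.abs) (h2 ▸ memLp_const 1)
  simp only [mul_one] at h
  have h1 : ∫ (_ : Ω), (1 : ℝ) ^ (2 : ℝ) ∂(ℙ : Measure Ω) = 1 := by simp
  rw [h1, Real.one_rpow, mul_one] at h
  calc ∫ ω, |Y ω| ≤ (∫ ω, |Y ω| ^ (2 : ℝ)) ^ (1 / 2 : ℝ) := h
    _ = Real.sqrt (∫ ω, (Y ω) ^ 2) := by
        rw [Real.sqrt_eq_rpow]
        congr 1
        refine integral_congr_ae (ae_of_all _ fun ω => ?_)
        show |Y ω| ^ (2:ℝ) = Y ω ^ 2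
        rw [show (2:ℝ) = ((2:ℕ):ℝ) by norm_num, Real.rpow_natCast, sq_abs]

/-- Lemma 7: an L1 concentration bound for families of independent `[0,1]`-valued
random variables whose expectations sum (over `m`) to at most one. -/
theorem sum_abs_deviation_le_sqrt {Ω : Type*} [MeasureSpace Ω]
    [IsProbabilityMeasure (ℙ : Measure Ω)]
    (M N : ℕ) (hM : 0 < M) (hN : 0 < N)
    (X : Fin M → Fin N → Ω → ℝ)
    (hmeas : ∀ m n, Measurable (X m n))
    (hbdd : ∀ m n ω, X m n ω ∈ Set.Icc (0 : ℝ) 1)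
    (hind : ∀ m, iIndepFun (X m) ℙ)
    (hsum : ∀ n, ∑ m, (∫ ω, X m n ω) ≤ 1) :
    ∑ m, (∫ ω, |∑ n, (X m n ω - ∫ ω', X m n ω')|)
      ≤ Real.sqrt (M * N) := by
  -- basic facts
  have hX2 : ∀ m n, MemLp (X m n) 2 ℙ := fun m n =>
    MemLp.of_bound (hmeas m n).aestronglyMeasurable 1
      (ae_of_all _ fun ω => by
        rw [Real.norm_eq_abs, abs_le]
        exact ⟨by linarith [(hbdd m n ω).1], (hbdd m n ω).2⟩)
  have hint : ∀ m n, Integrable (X m n) ℙ := fun m n => (hX2 m n).integrable one_le_two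
  have hintnonneg : ∀ m n, 0 ≤ ∫ ω, X m n ω := fun m n =>
    integral_nonneg fun ω => (hbdd m n ω).1
  set a : Fin M → ℝ := fun m => ∑ n, ∫ ω, X m n ω with ha
  have hanonneg : ∀ m, 0 ≤ a m := fun m => Finset.sum_nonneg fun n _ => hintnonneg m n
  -- per-m bound
  have key : ∀ m, (∫ ω, |∑ n, (X m n ω - ∫ ω', X m n ω')|) ≤ Real.sqrt (a m) := by
    intro m
    have hYmem : MemLp (fun ω => ∑ n, (X m n ω - ∫ ω', X m n ω')) 2 ℙ := by
      have h := memLp_finsetSum' (μ := ℙ) Finset.univ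
        (f := fun n (ω : Ω) => X m n ω - ∫ ω', X m n ω')
        (fun n _ => (hX2 m n).sub (memLp_const _))
      convert h using 1
      ext ω
      simp
    refine (my_integral_abs_le_sqrt_integral_sq hYmem).trans (Real.sqrt_le_sqrt ?_)
    -- ∫ Y² = variance of the sum
    have hS : MemLp (∑ n, X m n) 2 ℙ := memLp_finsetSum' _ fun n _ => hX2 m n
    have hvar : (∫ ω, (∑ n, (X m n ω - ∫ ω', X m n ω')) ^ 2)
        = variance (∑ n, X m n) ℙ := by
      rw [variance_eq_integral hS.aemeasurable]
      refine integral_congr_ae (ae_of_all _ fun ω => ?_)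
      simp only [Pi.pow_apply, Pi.sub_apply, Finset.sum_apply]
      congr 1
      rw [Finset.sum_sub_distrib]
      congr 1
      rw [integral_finset_sum _ fun n _ => hint m n]
    rw [hvar, IndepFun.variance_sum (fun n _ => hX2 m n)
      (fun i _ j _ hij => (hind m).indepFun hij)]
    refine Finset.sum_le_sum fun n _ => ?_
    -- variance ≤ expectation for [0,1]-valued
    rw [variance_eq_sub (hX2 m n)]
    have h1 : (ℙ : Measure Ω)[(X m n) ^ 2] ≤ ∫ ω, X m n ω := by
      refine integral_mono ((hX2 m n).integrable_sq) (hint m n) fun ω => ?_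
      simp only [Pi.pow_apply]
      nlinarith [(hbdd m n ω).1, (hbdd m n ω).2]
    nlinarith [sq_nonneg ((ℙ : Measure Ω)[X m n])]
  calc ∑ m, (∫ ω, |∑ n, (X m n ω - ∫ ω', X m n ω')|) ≤ ∑ m, Real.sqrt (a m) :=
        Finset.sum_le_sum fun m _ => key m
    _ = ∑ m, Real.sqrt 1 * Real.sqrt (a m) := by simp
    _ ≤ Real.sqrt (∑ _m : Fin M, (1 : ℝ)) * Real.sqrt (∑ m, a m) :=
        Real.sum_sqrt_mul_sqrt_le _ (fun _ => zero_le_one) hanonneg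
    _ ≤ Real.sqrt M * Real.sqrt N := by
        refine mul_le_mul (by simp) (Real.sqrt_le_sqrt ?_) (Real.sqrt_nonneg _)
          (Real.sqrt_nonneg _)
        rw [ha]
        rw [Finset.sum_comm]
        calc ∑ n : Fin N, ∑ m, ∫ ω, X m n ω ≤ ∑ _n : Fin N, (1 : ℝ) :=
              Finset.sum_le_sum fun n _ => hsum n
          _ = N := by simp
    _ = Real.sqrt (M * N) := (Real.sqrt_mul (by positivity) _).symm
end

section
/- Consider an N-agent system on finite state space X and finite action space U where, conditioned on the joint state x_t^N = (x_t^1,…,x_t^N), agents choose actions independently with u_t^i ∼ π_t(x_t^i, μ_t^N), where μ_t^N is the empirical state distribution μ_t^N(x) = (1/N) Σ_i δ(x_t^i = x). Let ν_t^N(u) = (1/N) Σ_i δ(u_t^i = u) be the empirical action distribution and ν^MF(μ,π)(u) = Σ_x π(x,μ)(u) μ(x). Then E|ν_t^N − ν^MF(μ_t^N, π_t)|₁ ≤ √(|U|)/√N. -/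
open Finset

/-- Empirical distribution of a configuration of `N` agents. -/
noncomputable def emp {X : Type*} [Fintype X] [DecidableEq X] {N : ℕ}
    (s : Fin N → X) : X → ℝ :=
  fun x => (∑ i, if s i = x then (1 : ℝ) else 0) / N

section aux

variable {U : Type*} [Fintype U] [DecidableEq U] {N : ℕ}

/-- Expectation of a product of indicators over a set of marked agents. -/
lemma E_prod_ind (p : Fin N → U → ℝ) (hp : ∀ i, IsPmf (p i))
    (s : Finset (Fin N)) (u : U) :
    ∑ a : Fin N → U, (∏ i, p i (a i)) * ∏ j ∈ s, (if a j = u then (1:ℝ) else 0)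
      = ∏ j ∈ s, p j u := by
  have key : ∀ a : Fin N → U,
      (∏ i, p i (a i)) * ∏ j ∈ s, (if a j = u then (1:ℝ) else 0)
        = ∏ i, (p i (a i) * if i ∈ s then (if a i = u then (1:ℝ) else 0) else 1) := by
    intro a
    rw [Finset.prod_mul_distrib]
    congr 1
    symm
    rw [Finset.prod_ite_mem, Finset.univ_inter]
  simp_rw [key]
  rw [← Fintype.prod_sum fun i v => p i v * if i ∈ s then (if v = u then (1:ℝ) else 0) else 1]
  have h2 : ∀ i : Fin N, (∑ v, p i v * if i ∈ s then (if v = u then (1:ℝ) else 0) else 1)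
      = if i ∈ s then p i u else 1 := by
    intro i
    by_cases hi : i ∈ s <;> simp [hi, (hp i).2, mul_ite]
  simp_rw [h2]
  rw [Finset.prod_ite_mem, Finset.univ_inter]

end aux

/-- Lemma 4: conditioned on the joint state `x`, when the `N` agents choose actions
independently according to `π (x i) (emp x)`, the expected L1 distance between the
empirical action distribution and `ν^MF(emp x, π)` is at most `√|U| / √N`.
The expectation is written out explicitly as a sum over all joint actions, weighted
by the product law of the independent action choices. -/
theorem empirical_action_distribution_bound
    {X U : Type*} [Fintype X] [Fintype U] [DecidableEq X] [DecidableEq U]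
    (N : ℕ) (hN : 0 < N)
    (π : X → (X → ℝ) → U → ℝ)
    (hπ : ∀ x μ, IsPmf μ → IsPmf (π x μ))
    (x : Fin N → X) :
    ∑ a : Fin N → U, (∏ i, π (x i) (emp x) (a i)) *
        l1 (fun u => emp a u - nuMF (emp x) π u)
      ≤ Real.sqrt (Fintype.card U) / Real.sqrt N := by
  have hNpos : (0:ℝ) < N := by exact_mod_cast hN
  -- emp x is a pmf
  have hμ : IsPmf (emp x) := by
    constructor
    · intro x'
      apply div_nonneg _ hNpos.le
      exact Finset.sum_nonneg fun i _ => by positivity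
    · simp only [emp]
      rw [← Finset.sum_div, Finset.sum_comm]
      simp [Finset.sum_ite_eq, div_eq_iff hNpos.ne']
  set μ := emp x with hμdef
  set p : Fin N → U → ℝ := fun i => π (x i) μ with hpdef
  have hp : ∀ i, IsPmf (p i) := fun i => hπ _ _ hμ
  set w : (Fin N → U) → ℝ := fun a => ∏ i, p i (a i) with hwdef
  have hw0 : ∀ a, 0 ≤ w a := fun a => Finset.prod_nonneg fun i _ => (hp i).1 _
  have hw1 : ∑ a, w a = 1 := by
    rw [hwdef, ← Fintype.prod_sum fun i v => p i v]
    simp [(hp _).2]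
  -- mean
  have hmean : ∀ u, nuMF μ π u = (∑ i, p i u) / N := by
    intro u
    simp only [nuMF, hμdef, emp]
    rw [eq_div_iff hNpos.ne', Finset.sum_mul]
    have h1 : ∀ x' : X, π x' (emp x) u * ((∑ i, if x i = x' then (1:ℝ) else 0) / ↑N) * ↑N
        = ∑ i, (if x i = x' then π x' (emp x) u else 0) := by
      intro x'
      have : π x' (emp x) u * ((∑ i, if x i = x' then (1:ℝ) else 0) / ↑N) * ↑N
          = π x' (emp x) u * (∑ i, if x i = x' then (1:ℝ) else 0) := by
        field_simp
      rw [this, Finset.mul_sum]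
      simp [mul_ite]
    simp_rw [h1]
    rw [Finset.sum_comm]
    apply Finset.sum_congr rfl
    intro i _
    simp [hpdef, hμdef]
  -- first moment
  have hE1 : ∀ (i : Fin N) u, ∑ a, w a * (if a i = u then (1:ℝ) else 0) = p i u := by
    intro i u
    have := E_prod_ind p hp {i} u
    simpa using this
  -- second moments
  have hE2 : ∀ (i k : Fin N) u, ∑ a, w a * ((if a i = u then (1:ℝ) else 0) *
      (if a k = u then (1:ℝ) else 0)) = if i = k then p i u else p i u * p k u := by
    intro i k u
    by_cases hik : i = k
    · subst hik
      simp only [if_pos rfl]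
      rw [← hE1 i u]
      apply Finset.sum_congr rfl
      intro a _
      by_cases h : a i = u <;> simp [h]
    · have := E_prod_ind p hp {i, k} u
      simp only [Finset.prod_pair hik] at this
      rw [if_neg hik]
      exact this
  -- variance bound per u
  set V : U → ℝ := fun u => ∑ a, w a * (emp a u - nuMF μ π u)^2 with hVdef
  have hV0 : ∀ u, 0 ≤ V u :=
    fun u => Finset.sum_nonneg fun a _ => mul_nonneg (hw0 a) (sq_nonneg _)
  have hVval : ∀ u, V u = ((∑ i, p i u) - ∑ i, (p i u)^2) / (N^2 : ℝ) := by
    intro u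
    have hm : nuMF μ π u = (∑ i, p i u) / N := hmean u
    have expand : ∀ a : Fin N → U, w a * (emp a u - nuMF μ π u)^2
        = (∑ i, ∑ k, w a * ((if a i = u then (1:ℝ) else 0) * (if a k = u then (1:ℝ) else 0))) / N^2
          - 2 * (nuMF μ π u / N) * (∑ i, w a * (if a i = u then (1:ℝ) else 0))
          + w a * (nuMF μ π u)^2 := by
      intro a
      have hS2 : (∑ i, if a i = u then (1:ℝ) else 0) ^ 2
          = ∑ i, ∑ k, (if a i = u then (1:ℝ) else 0) * (if a k = u then (1:ℝ) else 0) := by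
        rw [sq, Finset.sum_mul_sum]
      have hemp : emp a u = (∑ i, if a i = u then (1:ℝ) else 0) / N := rfl
      rw [hemp, sub_sq, div_pow, hS2]
      simp_rw [← Finset.mul_sum]
      field_simp
      simp only [← Finset.sum_mul, ← Finset.mul_sum]
    have hdbl : (∑ a : Fin N → U, ∑ i, ∑ k,
          w a * ((if a i = u then (1:ℝ) else 0) * (if a k = u then (1:ℝ) else 0)))
        = (∑ i, p i u) - (∑ i, (p i u)^2) + (∑ i, p i u)^2 := by
      rw [Finset.sum_comm]
      have h1 : ∀ i : Fin N, (∑ a : Fin N → U, ∑ k : Fin N,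
            w a * ((if a i = u then (1:ℝ) else 0) * (if a k = u then (1:ℝ) else 0)))
          = ∑ k, if i = k then p i u else p i u * p k u := by
        intro i
        rw [Finset.sum_comm]
        exact Finset.sum_congr rfl fun k _ => hE2 i k u
      simp_rw [h1]
      have h2 : ∀ i : Fin N, (∑ k, if i = k then p i u else p i u * p k u)
          = p i u * (∑ k, p k u) + (p i u - (p i u)^2) := by
        intro i
        have h3 : ∀ k : Fin N, (if i = k then p i u else p i u * p k u)
            = p i u * p k u + (if i = k then p i u - (p i u)^2 else 0) := by
          intro k
          split_ifs with h
          · subst h; ring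
          · ring
        simp_rw [h3]
        rw [Finset.sum_add_distrib, ← Finset.mul_sum, Finset.sum_ite_eq]
        simp
      simp_rw [h2]
      rw [Finset.sum_add_distrib, ← Finset.sum_mul, Finset.sum_sub_distrib]
      ring
    have hlin : (∑ a : Fin N → U, ∑ i, w a * (if a i = u then (1:ℝ) else 0)) = ∑ i, p i u := by
      rw [Finset.sum_comm]
      exact Finset.sum_congr rfl fun i _ => hE1 i u
    calc V u = ∑ a, w a * (emp a u - nuMF μ π u)^2 := by simp only [hVdef]
      _ = ∑ a : Fin N → U,
            ((∑ i, ∑ k, w a * ((if a i = u then (1:ℝ) else 0) * (if a k = u then (1:ℝ) else 0))) / N^2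
            - 2 * (nuMF μ π u / N) * (∑ i, w a * (if a i = u then (1:ℝ) else 0))
            + w a * (nuMF μ π u)^2) := Finset.sum_congr rfl fun a _ => expand a
      _ = (∑ a : Fin N → U, ∑ i, ∑ k,
              w a * ((if a i = u then (1:ℝ) else 0) * (if a k = u then (1:ℝ) else 0))) / N^2
          - 2 * (nuMF μ π u / N) * (∑ a : Fin N → U, ∑ i, w a * (if a i = u then (1:ℝ) else 0))
          + (∑ a, w a) * (nuMF μ π u)^2 := by
          rw [Finset.sum_add_distrib, Finset.sum_sub_distrib, ← Finset.sum_div,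
            ← Finset.mul_sum, ← Finset.sum_mul]
      _ = ((∑ i, p i u) - (∑ i, (p i u)^2) + (∑ i, p i u)^2) / N^2
          - 2 * (((∑ i, p i u) / N) / N) * (∑ i, p i u) + 1 * ((∑ i, p i u) / N)^2 := by
          rw [hdbl, hlin, hw1, hm]
      _ = ((∑ i, p i u) - ∑ i, (p i u)^2) / (N^2 : ℝ) := by
          field_simp
          ring
  have hVbound : ∑ u, V u ≤ 1 / N := by
    have step : ∑ u, V u ≤ ∑ u, (∑ i, p i u) / (N^2:ℝ) := by
      apply Finset.sum_le_sum
      intro u _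
      rw [hVval u]
      apply div_le_div_of_nonneg_right _ (by positivity)
      have : 0 ≤ ∑ i, (p i u)^2 := Finset.sum_nonneg fun i _ => sq_nonneg _
      linarith
    refine step.trans ?_
    rw [← Finset.sum_div, Finset.sum_comm]
    have h1 : ∀ i : Fin N, ∑ u, p i u = 1 := fun i => (hp i).2
    simp_rw [h1]
    rw [Finset.sum_const, Finset.card_univ, Fintype.card_fin, nsmul_eq_mul, mul_one]
    apply le_of_eq
    rw [pow_two, ← div_div, div_self hNpos.ne', one_div]
  -- Jensen per u
  have hJensen : ∀ u, ∑ a, w a * |emp a u - nuMF μ π u| ≤ Real.sqrt (V u) := by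
    intro u
    refine (Real.le_sqrt (Finset.sum_nonneg fun a _ => mul_nonneg (hw0 a) (abs_nonneg _))
      (hV0 u)).mpr ?_
    calc (∑ a, w a * |emp a u - nuMF μ π u|)^2
        = (∑ a, Real.sqrt (w a) * (Real.sqrt (w a) * |emp a u - nuMF μ π u|))^2 := by
          congr 1
          apply Finset.sum_congr rfl; intro a _
          rw [← mul_assoc, Real.mul_self_sqrt (hw0 a)]
      _ ≤ (∑ a, Real.sqrt (w a)^2) * ∑ a, (Real.sqrt (w a) * |emp a u - nuMF μ π u|)^2 :=
          Finset.sum_mul_sq_le_sq_mul_sq _ _ _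
      _ = V u := by
          have e1 : ∀ a : Fin N → U, Real.sqrt (w a)^2 = w a := fun a => Real.sq_sqrt (hw0 a)
          simp_rw [mul_pow, e1, sq_abs]
          rw [hw1, one_mul]
  -- put it together
  have step1 : ∑ a : Fin N → U, w a * l1 (fun u => emp a u - nuMF μ π u)
      = ∑ u, ∑ a, w a * |emp a u - nuMF μ π u| := by
    rw [Finset.sum_comm]
    apply Finset.sum_congr rfl
    intro a _
    rw [l1, Finset.mul_sum]
  calc ∑ a : Fin N → U, (∏ i, p i (a i)) * l1 (fun u => emp a u - nuMF μ π u)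
      = ∑ u, ∑ a, w a * |emp a u - nuMF μ π u| := step1
    _ ≤ ∑ u, Real.sqrt (V u) := Finset.sum_le_sum fun u _ => hJensen u
    _ ≤ Real.sqrt (Fintype.card U) * Real.sqrt (∑ u, V u) := by
        rw [← Real.sqrt_mul (by positivity)]
        refine (Real.le_sqrt (Finset.sum_nonneg fun u _ => Real.sqrt_nonneg _)
          (mul_nonneg (Nat.cast_nonneg _) (Finset.sum_nonneg fun u _ => hV0 u))).mpr ?_
        calc (∑ u, Real.sqrt (V u))^2 = (∑ u, 1 * Real.sqrt (V u))^2 := by simp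
          _ ≤ (∑ _u : U, (1:ℝ)^2) * ∑ u, Real.sqrt (V u)^2 :=
              Finset.sum_mul_sq_le_sq_mul_sq _ _ _
          _ = (Fintype.card U : ℝ) * ∑ u, V u := by
              simp_rw [Real.sq_sqrt (hV0 _)]
              simp [Finset.card_univ]
    _ ≤ Real.sqrt (Fintype.card U) * Real.sqrt (1 / N) := by
        apply mul_le_mul_of_nonneg_left _ (Real.sqrt_nonneg _)
        exact Real.sqrt_le_sqrt hVbound
    _ = Real.sqrt (Fintype.card U) / Real.sqrt N := by
        rw [one_div, Real.sqrt_inv, ← div_eq_mul_inv]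
end

section
/- Consider an N-agent system on finite spaces X, U with transition kernel P : X × U × P(X) × P(U) → P(X) satisfying |P(x,u,μ₁,ν₁) − P(x,u,μ₂,ν₂)|₁ ≤ L_P(|μ₁−μ₂|₁ + |ν₁−ν₂|₁). Given joint state x_t^N with empirical distribution μ_t^N, agents sample actions u_t^i ∼ π_t(x_t^i, μ_t^N) independently, and next states x_{t+1}^i ∼ P(x_t^i, u_t^i, μ_t^N, ν_t^N) independently given states and actions, where ν_t^N is the empirical action distribution. Let μ_{t+1}^N be the empirical distribution of the next states and P^MF the mean-field update defined by P^MF(μ,π)(y) = Σ_x Σ_u P(x,u,μ,ν^MF(μ,π))(y) π(x,μ)(u) μ(x). Then E|μ_{t+1}^N − P^MF(μ_t^N, π_t)|₁ ≤ (2 + L_P)(√(|X|) + √(|U|))/√N. -/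
open Finset

section aux
variable {V : Type*} [Fintype V] [DecidableEq V] {N : ℕ}

lemma sum_prod_pi (F : Fin N → V → ℝ) :
    ∑ v : Fin N → V, ∏ i, F i (v i) = ∏ i, ∑ w, F i w :=
  (Fintype.prod_sum F).symm

lemma weights_sum_one (q : Fin N → V → ℝ) (hq : ∀ i, IsPmf (q i)) :
    ∑ v : Fin N → V, ∏ i, q i (v i) = 1 := by
  rw [sum_prod_pi]
  exact Finset.prod_eq_one fun i _ => (hq i).2

lemma expect_single (q : Fin N → V → ℝ) (hq : ∀ i, IsPmf (q i)) (k : Fin N) (g : V → ℝ) :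
    ∑ v : Fin N → V, (∏ i, q i (v i)) * g (v k) = ∑ w, q k w * g w := by
  have h1 : ∀ v : Fin N → V, (∏ i, q i (v i)) * g (v k)
      = ∏ i, (q i (v i) * (if i = k then g (v i) else 1)) := by
    intro v
    rw [Finset.prod_mul_distrib, Finset.prod_ite_eq' univ k (fun i => g (v i))]
    simp
  rw [Finset.sum_congr rfl fun v _ => h1 v,
    sum_prod_pi (fun i w => q i w * if i = k then g w else 1),
    Finset.prod_eq_single k (fun b _ hb => by simp [hb, (hq b).2]) (by simp)]
  simp

lemma expect_pair_zero (q : Fin N → V → ℝ) (hq : ∀ i, IsPmf (q i)) {i j : Fin N} (hij : i ≠ j)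
    (gi gj : V → ℝ) (hgi : ∑ w, q i w * gi w = 0) :
    ∑ v : Fin N → V, (∏ k, q k (v k)) * (gi (v i) * gj (v j)) = 0 := by
  have h1 : ∀ v : Fin N → V, (∏ k, q k (v k)) * (gi (v i) * gj (v j))
      = ∏ k, (q k (v k) * ((if k = i then gi (v k) else 1) * (if k = j then gj (v k) else 1))) := by
    intro v
    rw [Finset.prod_mul_distrib, Finset.prod_mul_distrib,
      Finset.prod_ite_eq' univ i (fun k => gi (v k)),
      Finset.prod_ite_eq' univ j (fun k => gj (v k))]
    simp [mul_assoc]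
  rw [Finset.sum_congr rfl fun v _ => h1 v,
    sum_prod_pi (fun k w => q k w * ((if k = i then gi w else 1) * if k = j then gj w else 1))]
  apply Finset.prod_eq_zero (Finset.mem_univ i)
  simpa [hij] using hgi

end aux

lemma weighted_abs_le_sqrt {α : Type*} [Fintype α] (W d : α → ℝ) (hW : ∀ a, 0 ≤ W a)
    (hW1 : ∑ a, W a = 1) :
    ∑ a, W a * |d a| ≤ Real.sqrt (∑ a, W a * (d a) ^ 2) := by
  have key : (∑ a, W a * |d a|) ^ 2 ≤ ∑ a, W a * (d a) ^ 2 := by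
    have h := Finset.sum_mul_sq_le_sq_mul_sq univ (fun a => Real.sqrt (W a))
      (fun a => Real.sqrt (W a) * |d a|)
    have e1 : ∀ a : α, Real.sqrt (W a) * (Real.sqrt (W a) * |d a|) = W a * |d a| := fun a => by
      rw [← mul_assoc, Real.mul_self_sqrt (hW a)]
    have e2 : ∀ a : α, (Real.sqrt (W a) * |d a|) ^ 2 = W a * (d a) ^ 2 := fun a => by
      rw [mul_pow, Real.sq_sqrt (hW a), sq_abs]
    have e3 : ∀ a : α, (Real.sqrt (W a)) ^ 2 = W a := fun a => Real.sq_sqrt (hW a)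
    simp only [e1, e2, e3, hW1, one_mul] at h
    exact h
  calc ∑ a, W a * |d a| = Real.sqrt ((∑ a, W a * |d a|) ^ 2) := by
        rw [Real.sqrt_sq (Finset.sum_nonneg fun a _ => mul_nonneg (hW a) (abs_nonneg _))]
    _ ≤ _ := Real.sqrt_le_sqrt key

section core
variable {V Y : Type*} [Fintype V] [DecidableEq V] [Fintype Y] {N : ℕ}

lemma variance_bound (q : Fin N → V → ℝ) (hq : ∀ i, IsPmf (q i))
    (f : Fin N → V → ℝ) (hf0 : ∀ i v, 0 ≤ f i v) (hf1 : ∀ i v, f i v ≤ 1) :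
    ∑ v : Fin N → V, (∏ i, q i (v i)) * (∑ i, (f i (v i) - ∑ w, q i w * f i w)) ^ 2
      ≤ ∑ i, ∑ w, q i w * f i w := by
  set μ : Fin N → ℝ := fun i => ∑ w, q i w * f i w with hμ
  set g : Fin N → V → ℝ := fun i w => f i w - μ i with hg
  have hmean : ∀ i, ∑ w, q i w * g i w = 0 := by
    intro i
    simp only [hg, mul_sub, Finset.sum_sub_distrib, ← Finset.sum_mul, (hq i).2]
    simp [hμ]
  have expand : ∀ v : Fin N → V, (∑ i, g i (v i)) ^ 2
      = ∑ i, ∑ j, g i (v i) * g j (v j) := by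
    intro v
    rw [sq, Finset.sum_mul_sum]
  calc ∑ v : Fin N → V, (∏ i, q i (v i)) * (∑ i, g i (v i)) ^ 2
      = ∑ i, ∑ j, ∑ v : Fin N → V, (∏ k, q k (v k)) * (g i (v i) * g j (v j)) := by
        simp_rw [expand, Finset.mul_sum]
        rw [Finset.sum_comm]
        refine Finset.sum_congr rfl fun i _ => Finset.sum_comm
    _ = ∑ i, ∑ w, q i w * (g i w) ^ 2 := by
        refine Finset.sum_congr rfl fun i _ => ?_
        rw [Finset.sum_eq_single i]
        · have := expect_single q hq i (fun w => (g i w) ^ 2)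
          rw [← this]
          refine Finset.sum_congr rfl fun v _ => by rw [sq]
        · intro j _ hji
          exact expect_pair_zero q hq (Ne.symm hji) (g i) (g j) (hmean i)
        · simp
    _ ≤ ∑ i, μ i := by
        refine Finset.sum_le_sum fun i _ => ?_
        have expand2 : ∑ w, q i w * (g i w) ^ 2 = (∑ w, q i w * (f i w) ^ 2) - (μ i) ^ 2 := by
          have h1 : ∀ w, q i w * (g i w) ^ 2
              = q i w * (f i w) ^ 2 - 2 * μ i * (q i w * f i w) + (μ i) ^ 2 * q i w := by
            intro w; simp only [hg]; ring
          rw [Finset.sum_congr rfl fun w _ => h1 w]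
          rw [Finset.sum_add_distrib, Finset.sum_sub_distrib, ← Finset.mul_sum, ← Finset.mul_sum,
            (hq i).2]
          have hμi : ∑ w, q i w * f i w = μ i := rfl
          rw [hμi]
          ring
        rw [expand2]
        have h2 : ∑ w, q i w * (f i w) ^ 2 ≤ μ i := by
          rw [hμ]
          refine Finset.sum_le_sum fun w _ => ?_
          have : (f i w) ^ 2 ≤ f i w := by nlinarith [hf0 i w, hf1 i w]
          exact mul_le_mul_of_nonneg_left this ((hq i).1 w)
        nlinarith [sq_nonneg (μ i)]

lemma core (hN : 0 < N) (q : Fin N → V → ℝ) (hq : ∀ i, IsPmf (q i))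
    (f : Fin N → V → Y → ℝ) (hf : ∀ i v, IsPmf (f i v)) :
    ∑ v : Fin N → V, (∏ i, q i (v i)) *
        ∑ y, |(∑ i, f i (v i) y) / N - (∑ i, ∑ w, q i w * f i w y) / N|
      ≤ Real.sqrt (Fintype.card Y) / Real.sqrt N := by
  have hNR : (0:ℝ) < N := Nat.cast_pos.2 hN
  have hWnn : ∀ v : Fin N → V, 0 ≤ ∏ i, q i (v i) :=
    fun v => Finset.prod_nonneg fun i _ => (hq i).1 (v i)
  have hW1 : ∑ v : Fin N → V, ∏ i, q i (v i) = 1 := weights_sum_one q hq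
  set m : Y → ℝ := fun y => (∑ i, ∑ w, q i w * f i w y) / N with hm
  have hmnn : ∀ y, 0 ≤ m y := by
    intro y
    apply div_nonneg _ hNR.le
    exact Finset.sum_nonneg fun i _ => Finset.sum_nonneg fun w _ =>
      mul_nonneg ((hq i).1 w) ((hf i w).1 y)
  have hmsum : ∑ y, m y = 1 := by
    rw [hm]
    simp only [← Finset.sum_div]
    rw [Finset.sum_comm]
    have : ∀ i : Fin N, ∑ y, ∑ w, q i w * f i w y = 1 := by
      intro i
      rw [Finset.sum_comm]
      have : ∀ w, ∑ y, q i w * f i w y = q i w := by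
        intro w; rw [← Finset.mul_sum, (hf i w).2, mul_one]
      rw [Finset.sum_congr rfl fun w _ => this w, (hq i).2]
    rw [Finset.sum_congr rfl fun i _ => this i]
    simp [hNR.ne']
  -- per-y bound
  have step1 : ∀ y : Y,
      ∑ v : Fin N → V, (∏ i, q i (v i)) * |(∑ i, f i (v i) y) / N - m y|
        ≤ Real.sqrt (m y / N) := by
    intro y
    have h1 := weighted_abs_le_sqrt (fun v : Fin N → V => ∏ i, q i (v i))
      (fun v => (∑ i, f i (v i) y) / N - m y) hWnn hW1
    refine h1.trans (Real.sqrt_le_sqrt ?_)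
    have h2 : ∀ v : Fin N → V, ((∑ i, f i (v i) y) / N - m y) ^ 2
        = (∑ i, (f i (v i) y - ∑ w, q i w * f i w y)) ^ 2 / (N:ℝ) ^ 2 := by
      intro v
      simp only [hm]
      rw [div_sub_div_same, div_pow, Finset.sum_sub_distrib]
    calc ∑ v : Fin N → V, (∏ i, q i (v i)) * ((∑ i, f i (v i) y) / N - m y) ^ 2
        = (∑ v : Fin N → V, (∏ i, q i (v i)) *
            (∑ i, (f i (v i) y - ∑ w, q i w * f i w y)) ^ 2) / (N:ℝ) ^ 2 := by
          rw [Finset.sum_div]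
          exact Finset.sum_congr rfl fun v _ => by rw [h2 v, mul_div_assoc]
      _ ≤ (∑ i, ∑ w, q i w * f i w y) / (N:ℝ) ^ 2 := by
          refine div_le_div_of_nonneg_right ?_ (by positivity)
          exact variance_bound q hq (fun i w => f i w y) (fun i w => (hf i w).1 y)
            (fun i w => by
              calc f i w y ≤ ∑ y', f i w y' :=
                    Finset.single_le_sum (fun y' _ => (hf i w).1 y') (Finset.mem_univ y)
                _ = 1 := (hf i w).2)
      _ = m y / N := by
          simp only [hm]
          rw [div_div, sq]
  -- sum over y
  calc ∑ v : Fin N → V, (∏ i, q i (v i)) *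
        ∑ y, |(∑ i, f i (v i) y) / N - (∑ i, ∑ w, q i w * f i w y) / N|
      = ∑ y, ∑ v : Fin N → V, (∏ i, q i (v i)) * |(∑ i, f i (v i) y) / N - m y| := by
        simp_rw [Finset.mul_sum]
        rw [Finset.sum_comm]
    _ ≤ ∑ y, Real.sqrt (m y / N) := Finset.sum_le_sum fun y _ => step1 y
    _ ≤ Real.sqrt (Fintype.card Y) / Real.sqrt N := by
        have hcs := Finset.sum_mul_sq_le_sq_mul_sq univ (fun _ : Y => (1:ℝ))
          (fun y => Real.sqrt (m y / N))
        simp only [one_pow, one_mul, Finset.sum_const, Finset.card_univ, nsmul_eq_mul,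
          mul_one] at hcs
        have hsq : ∀ y : Y, Real.sqrt (m y / N) ^ 2 = m y / N := fun y =>
          Real.sq_sqrt (div_nonneg (hmnn y) hNR.le)
        rw [Finset.sum_congr rfl fun y _ => hsq y, ← Finset.sum_div, hmsum] at hcs
        have hnn : 0 ≤ ∑ y, Real.sqrt (m y / N) :=
          Finset.sum_nonneg fun y _ => Real.sqrt_nonneg _
        calc ∑ y, Real.sqrt (m y / N)
            = Real.sqrt ((∑ y, Real.sqrt (m y / N)) ^ 2) := (Real.sqrt_sq hnn).symm
          _ ≤ Real.sqrt ((Fintype.card Y : ℝ) * (1 / N)) := Real.sqrt_le_sqrt hcs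
          _ = Real.sqrt (Fintype.card Y) / Real.sqrt N := by
              rw [Real.sqrt_mul (by positivity), one_div, Real.sqrt_inv, div_eq_mul_inv]

end core

section main
variable {X : Type*} [Fintype X] [DecidableEq X] {N : ℕ}

lemma emp_pmf (hN : 0 < N) (s : Fin N → X) : IsPmf (emp s) := by
  have hNR : (0:ℝ) < N := Nat.cast_pos.2 hN
  constructor
  · intro y
    unfold emp
    apply div_nonneg _ hNR.le
    exact Finset.sum_nonneg fun i _ => by positivity
  · unfold emp
    rw [← Finset.sum_div, Finset.sum_comm]
    simp [hNR.ne']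

lemma delta_pmf (w : X) : IsPmf (fun y : X => if w = y then (1:ℝ) else 0) := by
  constructor
  · intro y; positivity
  · simp

lemma sum_delta_mul (c : X → ℝ) (y : X) :
    (∑ w, c w * (if w = y then (1:ℝ) else 0)) = c y := by
  simp

end main

/-- Lemma 5: one-step propagation bound.  Conditioned on the joint state `x`, the agents
sample actions independently via `π`, then next states independently via `P` (which also
takes the empirical action distribution as an argument).  The expected L1 distance between
the next empirical state distribution and the mean-field update `P^MF(emp x, π)` is at most
`(2 + L_P)(√|X| + √|U|)/√N`.  The expectation is written out explicitly as a sum over all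
joint actions and joint next states, weighted by the corresponding product law. -/
theorem empirical_state_update_bound
    {X U : Type*} [Fintype X] [Fintype U] [DecidableEq X] [DecidableEq U]
    (N : ℕ) (hN : 0 < N)
    (L_P : ℝ) (hLP : 0 < L_P)
    (P : X → U → (X → ℝ) → (U → ℝ) → X → ℝ)
    (hP : ∀ x u μ ν, IsPmf μ → IsPmf ν → IsPmf (P x u μ ν))
    (hPLip : ∀ x u μ₁ μ₂ ν₁ ν₂, IsPmf μ₁ → IsPmf μ₂ → IsPmf ν₁ → IsPmf ν₂ →
      l1 (fun y => P x u μ₁ ν₁ y - P x u μ₂ ν₂ y)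
        ≤ L_P * (l1 (fun x' => μ₁ x' - μ₂ x') + l1 (fun u' => ν₁ u' - ν₂ u')))
    (π : X → (X → ℝ) → U → ℝ)
    (hπ : ∀ x μ, IsPmf μ → IsPmf (π x μ))
    (x : Fin N → X) :
    ∑ a : Fin N → U, ∑ s' : Fin N → X,
        ((∏ i, π (x i) (emp x) (a i)) * ∏ i, P (x i) (a i) (emp x) (emp a) (s' i)) *
          l1 (fun y => emp s' y - PMF' P (emp x) π y)
      ≤ (2 + L_P) * (Real.sqrt (Fintype.card X) + Real.sqrt (Fintype.card U)) / Real.sqrt N := by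
  have hNR : (0:ℝ) < N := Nat.cast_pos.2 hN
  set μ := emp x with hμdef
  have hμ : IsPmf μ := emp_pmf hN x
  set ν := nuMF μ π with hνdef
  have hq : ∀ i, IsPmf (π (x i) μ) := fun i => hπ (x i) μ hμ
  have hν : IsPmf ν := by
    constructor
    · intro u
      exact Finset.sum_nonneg fun x' _ => mul_nonneg ((hπ x' μ hμ).1 u) (hμ.1 x')
    · show ∑ u, ∑ x', π x' μ u * μ x' = 1
      rw [Finset.sum_comm]
      calc ∑ x', ∑ u, π x' μ u * μ x' = ∑ x', μ x' := by
            refine Finset.sum_congr rfl fun x' _ => ?_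
            rw [← Finset.sum_mul, (hπ x' μ hμ).2, one_mul]
        _ = 1 := hμ.2
  -- identities
  have hν_eq : ∀ u, ν u = (∑ i, π (x i) μ u) / N := by
    intro u
    show ∑ x', π x' μ u * μ x' = _
    have h1 : ∀ x', π x' μ u * μ x'
        = (∑ i, if x i = x' then π x' μ u else 0) / N := by
      intro x'
      show π x' μ u * ((∑ i, if x i = x' then (1:ℝ) else 0) / N) = _
      rw [← mul_div_assoc, Finset.mul_sum]
      congr 1
      exact Finset.sum_congr rfl fun i _ => by simp [mul_ite]
    rw [Finset.sum_congr rfl fun x' _ => h1 x', ← Finset.sum_div, Finset.sum_comm]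
    congr 1
    exact Finset.sum_congr rfl fun i _ => by simp
  have hPMF_eq : ∀ y, PMF' P μ π y = (∑ i, ∑ u, π (x i) μ u * P (x i) u μ ν y) / N := by
    intro y
    show ∑ x', ∑ u, P x' u μ ν y * π x' μ u * μ x' = _
    have h1 : ∀ x', ∑ u, P x' u μ ν y * π x' μ u * μ x'
        = (∑ i, if x i = x' then ∑ u, π x' μ u * P x' u μ ν y else 0) / N := by
      intro x'
      have h2 : ∀ u, P x' u μ ν y * π x' μ u * μ x'
          = (∑ i, if x i = x' then π x' μ u * P x' u μ ν y else 0) / N := by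
        intro u
        show P x' u μ ν y * π x' μ u * ((∑ i, if x i = x' then (1:ℝ) else 0) / N) = _
        rw [← mul_div_assoc, Finset.mul_sum]
        congr 1
        refine Finset.sum_congr rfl fun i _ => ?_
        simp only [mul_ite, mul_one, mul_zero]
        congr 1
        ring
      rw [Finset.sum_congr rfl fun u _ => h2 u, ← Finset.sum_div, Finset.sum_comm]
      congr 1
      exact Finset.sum_congr rfl fun i _ => by simp [Finset.sum_ite]
    rw [Finset.sum_congr rfl fun x' _ => h1 x', ← Finset.sum_div, Finset.sum_comm]
    congr 1
    exact Finset.sum_congr rfl fun i _ => by simp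
  -- weights and means
  set Wpi : (Fin N → U) → ℝ := fun a => ∏ i, π (x i) μ (a i) with hWpi
  have hWpinn : ∀ a, 0 ≤ Wpi a := fun a => Finset.prod_nonneg fun i _ => (hq i).1 (a i)
  have hWpi1 : ∑ a : Fin N → U, Wpi a = 1 := weights_sum_one _ hq
  have hempa : ∀ a : Fin N → U, IsPmf (emp a) := fun a => emp_pmf hN a
  have hQ : ∀ (a : Fin N → U) (i : Fin N), IsPmf (P (x i) (a i) μ (emp a)) :=
    fun a i => hP _ _ _ _ hμ (hempa a)
  have hQt : ∀ (u : U) (i : Fin N), IsPmf (P (x i) u μ ν) := fun u i => hP _ _ _ _ hμ hν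
  set WP : (Fin N → U) → (Fin N → X) → ℝ :=
    fun a s' => ∏ i, P (x i) (a i) μ (emp a) (s' i) with hWP
  have hWPnn : ∀ a s', 0 ≤ WP a s' :=
    fun a s' => Finset.prod_nonneg fun i _ => (hQ a i).1 (s' i)
  have hWP1 : ∀ a, ∑ s' : Fin N → X, WP a s' = 1 :=
    fun a => weights_sum_one _ (hQ a)
  set mA : (Fin N → U) → X → ℝ :=
    fun a y => (∑ i, P (x i) (a i) μ (emp a) y) / N with hmA
  set mC : (Fin N → U) → X → ℝ :=
    fun a y => (∑ i, P (x i) (a i) μ ν y) / N with hmC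
  -- Bound A : conditional concentration of the empirical next-state distribution
  have boundA : ∀ a, ∑ s' : Fin N → X, WP a s' * l1 (fun y => emp s' y - mA a y)
      ≤ Real.sqrt (Fintype.card X) / Real.sqrt N := by
    intro a
    have hc := core hN (fun i => P (x i) (a i) μ (emp a)) (hQ a)
      (fun _ w y => if w = y then (1:ℝ) else 0) (fun _ w => delta_pmf w)
    refine le_trans (le_of_eq ?_) hc
    refine Finset.sum_congr rfl fun s' _ => ?_
    congr 1
    show ∑ y, |emp s' y - mA a y| = _
    refine Finset.sum_congr rfl fun y _ => ?_
    congr 1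
    show emp s' y - mA a y = _
    congr 1
    show (∑ i, P (x i) (a i) μ (emp a) y) / (N:ℝ) = _
    congr 1
    exact (Finset.sum_congr rfl fun i _ =>
      (sum_delta_mul (P (x i) (a i) μ (emp a)) y).symm)
  -- Bound B' : concentration of the empirical action distribution
  have boundB : ∑ a : Fin N → U, Wpi a * l1 (fun u => emp a u - ν u)
      ≤ Real.sqrt (Fintype.card U) / Real.sqrt N := by
    have hc := core hN (fun i => π (x i) μ) hq
      (fun _ w u => if w = u then (1:ℝ) else 0) (fun _ w => delta_pmf w)
    refine le_trans (le_of_eq ?_) hc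
    refine Finset.sum_congr rfl fun a _ => ?_
    congr 1
    show ∑ u, |emp a u - ν u| = _
    refine Finset.sum_congr rfl fun u _ => ?_
    congr 1
    show emp a u - ν u = _
    congr 1
    rw [hν_eq u]
    congr 1
    exact Finset.sum_congr rfl fun i _ => (sum_delta_mul (π (x i) μ) u).symm
  -- Bound C : concentration of the mean transition around the mean-field update
  have boundC : ∑ a : Fin N → U, Wpi a * l1 (fun y => mC a y - PMF' P μ π y)
      ≤ Real.sqrt (Fintype.card X) / Real.sqrt N := by
    have hc := core hN (fun i => π (x i) μ) hq
      (fun i u y => P (x i) u μ ν y) (fun i u => hQt u i)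
    refine le_trans (le_of_eq ?_) hc
    refine Finset.sum_congr rfl fun a _ => ?_
    congr 1
    show ∑ y, |mC a y - PMF' P μ π y| = _
    refine Finset.sum_congr rfl fun y _ => ?_
    congr 1
    rw [hPMF_eq y]
  -- Lipschitz step
  have hLips : ∀ a : Fin N → U, l1 (fun y => mA a y - mC a y)
      ≤ L_P * l1 (fun u => emp a u - ν u) := by
    intro a
    show ∑ y, |mA a y - mC a y| ≤ _
    have h1 : ∀ y, |mA a y - mC a y|
        ≤ (∑ i, |P (x i) (a i) μ (emp a) y - P (x i) (a i) μ ν y|) / N := by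
      intro y
      rw [hmA, hmC, div_sub_div_same, ← Finset.sum_sub_distrib]
      rw [abs_div, abs_of_pos hNR]
      exact div_le_div_of_nonneg_right (Finset.abs_sum_le_sum_abs _ _) hNR.le
    calc ∑ y, |mA a y - mC a y|
        ≤ ∑ y, (∑ i, |P (x i) (a i) μ (emp a) y - P (x i) (a i) μ ν y|) / N :=
          Finset.sum_le_sum fun y _ => h1 y
      _ = (∑ i, l1 (fun y => P (x i) (a i) μ (emp a) y - P (x i) (a i) μ ν y)) / N := by
          rw [← Finset.sum_div, Finset.sum_comm]
          rfl
      _ ≤ (∑ _i : Fin N, L_P * l1 (fun u => emp a u - ν u)) / N := by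
          apply div_le_div_of_nonneg_right _ hNR.le
          refine Finset.sum_le_sum fun i _ => ?_
          have hl := hPLip (x i) (a i) μ μ (emp a) ν hμ hμ (hempa a) hν
          have h0 : l1 (fun x' => μ x' - μ x') = 0 := by simp [l1]
          rw [h0, zero_add] at hl
          exact hl
      _ = L_P * l1 (fun u => emp a u - ν u) := by
          rw [Finset.sum_const, Finset.card_univ, Fintype.card_fin, nsmul_eq_mul]
          field_simp
  -- triangle inequality and assembly
  have tri : ∀ (a : Fin N → U) (s' : Fin N → X),
      l1 (fun y => emp s' y - PMF' P μ π y)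
        ≤ l1 (fun y => emp s' y - mA a y) + l1 (fun y => mA a y - mC a y)
          + l1 (fun y => mC a y - PMF' P μ π y) := by
    intro a s'
    have hpt : ∀ y, |emp s' y - PMF' P μ π y|
        ≤ |emp s' y - mA a y| + |mA a y - mC a y| + |mC a y - PMF' P μ π y| := by
      intro y
      calc |emp s' y - PMF' P μ π y|
          ≤ |emp s' y - mA a y| + |mA a y - PMF' P μ π y| := abs_sub_le _ _ _
        _ ≤ |emp s' y - mA a y| + (|mA a y - mC a y| + |mC a y - PMF' P μ π y|) := by
            gcongr
            exact abs_sub_le _ _ _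
        _ = _ := (add_assoc _ _ _).symm
    calc l1 (fun y => emp s' y - PMF' P μ π y)
        = ∑ y, |emp s' y - PMF' P μ π y| := rfl
      _ ≤ ∑ y, (|emp s' y - mA a y| + |mA a y - mC a y| + |mC a y - PMF' P μ π y|) :=
          Finset.sum_le_sum fun y _ => hpt y
      _ = _ := by
          rw [Finset.sum_add_distrib, Finset.sum_add_distrib]
          rfl
  calc ∑ a : Fin N → U, ∑ s' : Fin N → X,
        (Wpi a * WP a s') * l1 (fun y => emp s' y - PMF' P μ π y)
      ≤ ∑ a : Fin N → U, ∑ s' : Fin N → X,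
          (Wpi a * WP a s') * (l1 (fun y => emp s' y - mA a y)
            + l1 (fun y => mA a y - mC a y) + l1 (fun y => mC a y - PMF' P μ π y)) := by
        refine Finset.sum_le_sum fun a _ => Finset.sum_le_sum fun s' _ => ?_
        exact mul_le_mul_of_nonneg_left (tri a s') (mul_nonneg (hWpinn a) (hWPnn a s'))
    _ = (∑ a : Fin N → U, Wpi a * ∑ s' : Fin N → X,
            WP a s' * l1 (fun y => emp s' y - mA a y))
        + (∑ a : Fin N → U, Wpi a * l1 (fun y => mA a y - mC a y))
        + (∑ a : Fin N → U, Wpi a * l1 (fun y => mC a y - PMF' P μ π y)) := by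
        have per_a : ∀ a : Fin N → U,
            ∑ s' : Fin N → X, (Wpi a * WP a s') * (l1 (fun y => emp s' y - mA a y)
              + l1 (fun y => mA a y - mC a y) + l1 (fun y => mC a y - PMF' P μ π y))
            = Wpi a * (∑ s' : Fin N → X, WP a s' * l1 (fun y => emp s' y - mA a y))
              + Wpi a * l1 (fun y => mA a y - mC a y)
              + Wpi a * l1 (fun y => mC a y - PMF' P μ π y) := by
          intro a
          have expand : ∀ s' : Fin N → X, (Wpi a * WP a s') * (l1 (fun y => emp s' y - mA a y)
              + l1 (fun y => mA a y - mC a y) + l1 (fun y => mC a y - PMF' P μ π y))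
              = Wpi a * (WP a s' * l1 (fun y => emp s' y - mA a y))
                + (Wpi a * l1 (fun y => mA a y - mC a y)) * WP a s'
                + (Wpi a * l1 (fun y => mC a y - PMF' P μ π y)) * WP a s' := fun s' => by ring
          rw [Finset.sum_congr rfl fun s' _ => expand s', Finset.sum_add_distrib,
            Finset.sum_add_distrib, ← Finset.mul_sum, ← Finset.mul_sum, ← Finset.mul_sum,
            hWP1 a, mul_one, mul_one]
        rw [Finset.sum_congr rfl fun a _ => per_a a, Finset.sum_add_distrib,
          Finset.sum_add_distrib]
    _ ≤ (Real.sqrt (Fintype.card X) / Real.sqrt N)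
        + L_P * (Real.sqrt (Fintype.card U) / Real.sqrt N)
        + (Real.sqrt (Fintype.card X) / Real.sqrt N) := by
        refine add_le_add (add_le_add ?_ ?_) ?_
        · calc ∑ a : Fin N → U, Wpi a * ∑ s' : Fin N → X,
                WP a s' * l1 (fun y => emp s' y - mA a y)
              ≤ ∑ a : Fin N → U, Wpi a * (Real.sqrt (Fintype.card X) / Real.sqrt N) :=
                Finset.sum_le_sum fun a _ =>
                  mul_le_mul_of_nonneg_left (boundA a) (hWpinn a)
            _ = Real.sqrt (Fintype.card X) / Real.sqrt N := by
                rw [← Finset.sum_mul, hWpi1, one_mul]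
        · calc ∑ a : Fin N → U, Wpi a * l1 (fun y => mA a y - mC a y)
              ≤ ∑ a : Fin N → U, Wpi a * (L_P * l1 (fun u => emp a u - ν u)) :=
                Finset.sum_le_sum fun a _ =>
                  mul_le_mul_of_nonneg_left (hLips a) (hWpinn a)
            _ = L_P * ∑ a : Fin N → U, Wpi a * l1 (fun u => emp a u - ν u) := by
                rw [Finset.mul_sum]
                exact Finset.sum_congr rfl fun a _ => by ring
            _ ≤ L_P * (Real.sqrt (Fintype.card U) / Real.sqrt N) :=
                mul_le_mul_of_nonneg_left boundB hLP.le
        · exact boundC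
    _ ≤ (2 + L_P) * (Real.sqrt (Fintype.card X) + Real.sqrt (Fintype.card U)) / Real.sqrt N := by
        rw [show L_P * (Real.sqrt (Fintype.card U) / Real.sqrt N)
            = L_P * Real.sqrt (Fintype.card U) / Real.sqrt N by ring]
        rw [← add_div, ← add_div]
        apply div_le_div_of_nonneg_right _ (Real.sqrt_pos.2 hNR).le
        nlinarith [Real.sqrt_nonneg (Fintype.card X : ℝ), Real.sqrt_nonneg (Fintype.card U : ℝ),
          hLP.le]
end

section
/- In the N-agent system on finite spaces X, U where the transition kernel P(x,u,μ) does not depend on the action distribution, with agents sampling actions independently via π_t(x_t^i, μ_t^N) and next states independently via P(x_t^i, u_t^i, μ_t^N), the empirical next-state distribution μ_{t+1}^N satisfies E|μ_{t+1}^N − P^MF(μ_t^N, π_t)|₁ ≤ 2√(|X|)/√N, where P^MF(μ,π)(y) = Σ_x Σ_u P(x,u,μ)(y) π(x,μ)(u) μ(x). -/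
open Finset

/-- Mean-field state update when the transition kernel does not depend on the
action distribution. -/
noncomputable def PMFind {X U : Type*} [Fintype X] [Fintype U]
    (P : X → U → (X → ℝ) → X → ℝ)
    (μ : X → ℝ) (π : X → (X → ℝ) → U → ℝ) : X → ℝ :=
  fun y => ∑ x, ∑ u, P x u μ y * π x μ u * μ x

/-! ### Auxiliary lemmas -/

lemma sum_pi_prod {ι : Type*} [Fintype ι] [DecidableEq ι] {X : Type*} [Fintype X]
    (g : ι → X → ℝ) : ∑ s : ι → X, ∏ i, g i (s i) = ∏ i, ∑ x, g i x := by
  rw [Finset.prod_univ_sum, Fintype.piFinset_univ]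

lemma jensen_abs {S : Type*} [Fintype S] (w g : S → ℝ) (hw : ∀ s, 0 ≤ w s)
    (hw1 : ∑ s, w s = 1) :
    ∑ s, w s * |g s| ≤ Real.sqrt (∑ s, w s * (g s) ^ 2) := by
  have h0 : 0 ≤ ∑ s, w s * |g s| :=
    Finset.sum_nonneg fun s _ => mul_nonneg (hw s) (abs_nonneg _)
  have h1 : 0 ≤ ∑ s, w s * (g s) ^ 2 :=
    Finset.sum_nonneg fun s _ => mul_nonneg (hw s) (sq_nonneg _)
  rw [Real.le_sqrt h0 h1]
  calc (∑ s, w s * |g s|) ^ 2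
      = (∑ s, Real.sqrt (w s) * (Real.sqrt (w s) * |g s|)) ^ 2 := by
        congr 1
        refine Finset.sum_congr rfl fun s _ => ?_
        rw [← mul_assoc, Real.mul_self_sqrt (hw s)]
    _ ≤ (∑ s, Real.sqrt (w s) ^ 2) * ∑ s, (Real.sqrt (w s) * |g s|) ^ 2 :=
        Finset.sum_mul_sq_le_sq_mul_sq _ _ _
    _ = (∑ s, w s) * ∑ s, w s * (g s) ^ 2 := by
        congr 1
        · exact Finset.sum_congr rfl fun s _ => Real.sq_sqrt (hw s)
        · refine Finset.sum_congr rfl fun s _ => ?_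
          rw [mul_pow, Real.sq_sqrt (hw s), sq_abs]
    _ = ∑ s, w s * (g s) ^ 2 := by rw [hw1, one_mul]

lemma sum_sqrt_le {S : Type*} [Fintype S] (v : S → ℝ) (hv : ∀ s, 0 ≤ v s) :
    ∑ s, Real.sqrt (v s) ≤ Real.sqrt ((Fintype.card S : ℝ) * ∑ s, v s) := by
  have h0 : 0 ≤ ∑ s, Real.sqrt (v s) :=
    Finset.sum_nonneg fun s _ => Real.sqrt_nonneg _
  have h1 : (0:ℝ) ≤ (Fintype.card S : ℝ) * ∑ s, v s :=
    mul_nonneg (Nat.cast_nonneg _) (Finset.sum_nonneg fun s _ => hv s)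
  rw [Real.le_sqrt h0 h1]
  calc (∑ s, Real.sqrt (v s)) ^ 2 = (∑ s, 1 * Real.sqrt (v s)) ^ 2 := by simp
    _ ≤ (∑ _s : S, (1:ℝ) ^ 2) * ∑ s, Real.sqrt (v s) ^ 2 :=
        Finset.sum_mul_sq_le_sq_mul_sq _ _ _
    _ = (Fintype.card S : ℝ) * ∑ s, v s := by
        congr 1
        · simp
        · exact Finset.sum_congr rfl fun s _ => Real.sq_sqrt (hv s)

set_option maxHeartbeats 2000000 in
/-- Core probabilistic estimate: for independent (non-identical) samples with laws
`Q i`, the expected L1 distance between the empirical measure and the average law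
is at most `√|X|/√N`. -/
lemma prob_bound {X : Type*} [Fintype X] [DecidableEq X] (N : ℕ) (hN : 0 < N)
    (Q : Fin N → X → ℝ) (hQ0 : ∀ i y, 0 ≤ Q i y) (hQ1 : ∀ i, ∑ y, Q i y = 1) :
    ∑ s' : Fin N → X, (∏ i, Q i (s' i)) *
        (∑ y, |emp s' y - (∑ i, Q i y) / N|)
      ≤ Real.sqrt (Fintype.card X) / Real.sqrt N := by
  have hNR : (0:ℝ) < N := by exact_mod_cast hN
  set W : (Fin N → X) → ℝ := fun s' => ∏ i, Q i (s' i) with hWdef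
  have hW0 : ∀ s', 0 ≤ W s' := fun s' => Finset.prod_nonneg fun i _ => hQ0 i _
  have hW1 : ∑ s', W s' = 1 := by
    rw [hWdef, sum_pi_prod]; simp [hQ1]
  set z : Fin N → X → X → ℝ := fun i y x' => (if x' = y then (1:ℝ) else 0) - Q i y
    with hzdef
  have hzsum : ∀ i y, ∑ x', Q i x' * z i y x' = 0 := by
    intro i y
    have h1 : ∑ x', Q i x' * (if x' = y then (1:ℝ) else 0) = Q i y := by
      simp [mul_ite, mul_one, mul_zero, Finset.sum_ite_eq']
    have h2 : ∑ x', Q i x' * z i y x'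
        = (∑ x', Q i x' * (if x' = y then (1:ℝ) else 0)) - (∑ x', Q i x') * Q i y := by
      simp [hzdef, mul_sub, Finset.sum_sub_distrib, Finset.sum_mul]
    rw [h2, h1, hQ1 i, one_mul, sub_self]
  have hzsq : ∀ i y, ∑ x', Q i x' * (z i y x' * z i y x') ≤ Q i y := by
    intro i y
    have expand : ∀ x', Q i x' * (z i y x' * z i y x')
        = ((if x' = y then Q i x' else 0) - 2 * Q i y * (if x' = y then Q i x' else 0))
            + Q i y ^ 2 * Q i x' := by
      intro x'; simp only [hzdef]; split <;> ring
    rw [Finset.sum_congr rfl fun x' _ => expand x', Finset.sum_add_distrib,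
      Finset.sum_sub_distrib, ← Finset.mul_sum, ← Finset.mul_sum,
      Finset.sum_ite_eq' univ y (Q i), hQ1 i]
    simp only [Finset.mem_univ, if_true, mul_one]
    nlinarith [sq_nonneg (Q i y), hQ0 i y]
  have hVar : ∀ y, ∑ s', W s' * (emp s' y - (∑ i, Q i y) / N) ^ 2
      ≤ (∑ i, Q i y) / (N:ℝ) ^ 2 := by
    intro y
    have he : ∀ s' : Fin N → X,
        emp s' y - (∑ i, Q i y) / N = (∑ i, z i y (s' i)) / N := by
      intro s'
      simp only [emp, hzdef]
      rw [div_sub_div_same, ← Finset.sum_sub_distrib]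
    have hcross : ∀ i j : Fin N, i ≠ j →
        ∑ s', W s' * (z i y (s' i) * z j y (s' j)) = 0 := by
      intro i j hij
      have hpt : ∀ s' : Fin N → X, W s' * (z i y (s' i) * z j y (s' j))
          = ∏ k, (Q k (s' k) *
              ((if k = i then z i y (s' k) else 1) * (if k = j then z j y (s' k) else 1))) := by
        intro s'
        rw [Finset.prod_mul_distrib, Finset.prod_mul_distrib,
          Finset.prod_ite_eq' univ i (fun k => z i y (s' k)),
          Finset.prod_ite_eq' univ j (fun k => z j y (s' k))]
        simp [hWdef]
      calc ∑ s', W s' * (z i y (s' i) * z j y (s' j))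
          = ∑ s' : Fin N → X, ∏ k, (Q k (s' k) *
              ((if k = i then z i y (s' k) else 1) * (if k = j then z j y (s' k) else 1))) :=
            Finset.sum_congr rfl fun s' _ => hpt s'
        _ = ∏ k, ∑ x', Q k x' *
              ((if k = i then z i y x' else 1) * (if k = j then z j y x' else 1)) :=
            sum_pi_prod (fun k x' => Q k x' *
              ((if k = i then z i y x' else 1) * (if k = j then z j y x' else 1)))
        _ = 0 := by
            apply Finset.prod_eq_zero (Finset.mem_univ i)
            simp only [if_pos rfl, if_neg hij, mul_one]
            exact hzsum i y
    have hdiag : ∀ i : Fin N,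
        ∑ s', W s' * (z i y (s' i) * z i y (s' i)) ≤ Q i y := by
      intro i
      have hpt : ∀ s' : Fin N → X, W s' * (z i y (s' i) * z i y (s' i))
          = ∏ k, (Q k (s' k) * (if k = i then z i y (s' k) * z i y (s' k) else 1)) := by
        intro s'
        rw [Finset.prod_mul_distrib,
          Finset.prod_ite_eq' univ i (fun k => z i y (s' k) * z i y (s' k))]
        simp [hWdef]
      have : ∑ s', W s' * (z i y (s' i) * z i y (s' i))
          = ∑ x', Q i x' * (z i y x' * z i y x') := by
        rw [Finset.sum_congr rfl fun s' _ => hpt s',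
          sum_pi_prod (fun k x' => Q k x' * (if k = i then z i y x' * z i y x' else 1))]
        rw [Finset.prod_eq_single i
          (fun k _ hk => by simp [if_neg hk, hQ1 k]) (by simp)]
        simp
      rw [this]
      exact hzsq i y
    have h1 : ∀ s' : Fin N → X, W s' * (emp s' y - (∑ i, Q i y) / N) ^ 2
        = (∑ i, ∑ j, W s' * (z i y (s' i) * z j y (s' j))) / (N:ℝ) ^ 2 := by
      intro s'
      rw [he s', div_pow, sq, Finset.sum_mul_sum, ← mul_div_assoc, Finset.mul_sum]
      congr 1
      exact Finset.sum_congr rfl fun i _ => by rw [Finset.mul_sum]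
    calc ∑ s', W s' * (emp s' y - (∑ i, Q i y) / N) ^ 2
        = (∑ i, ∑ j, ∑ s', W s' * (z i y (s' i) * z j y (s' j))) / (N:ℝ) ^ 2 := by
          rw [Finset.sum_congr rfl fun s' _ => h1 s', ← Finset.sum_div]
          congr 1
          rw [Finset.sum_comm]
          exact Finset.sum_congr rfl fun i _ => Finset.sum_comm
      _ ≤ (∑ i, Q i y) / (N:ℝ) ^ 2 := by
          apply (div_le_div_iff_of_pos_right (by positivity)).mpr
          refine Finset.sum_le_sum fun i _ => ?_
          rw [Finset.sum_eq_single i (fun j _ hj => hcross i j (Ne.symm hj)) (by simp)]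
          exact hdiag i
  have swap : ∑ s' : Fin N → X, W s' * (∑ y, |emp s' y - (∑ i, Q i y) / N|)
      = ∑ y, ∑ s' : Fin N → X, W s' * |emp s' y - (∑ i, Q i y) / N| := by
    simp_rw [Finset.mul_sum]; exact Finset.sum_comm
  rw [swap]
  have hstep : ∀ y, ∑ s' : Fin N → X, W s' * |emp s' y - (∑ i, Q i y) / N|
      ≤ Real.sqrt ((∑ i, Q i y) / (N:ℝ) ^ 2) := fun y =>
    (jensen_abs W (fun s' => emp s' y - (∑ i, Q i y) / N) hW0 hW1).trans
      (Real.sqrt_le_sqrt (hVar y))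
  have hQnn : ∀ y, (0:ℝ) ≤ (∑ i, Q i y) / (N:ℝ) ^ 2 := fun y =>
    div_nonneg (Finset.sum_nonneg fun i _ => hQ0 i y) (by positivity)
  calc ∑ y, ∑ s' : Fin N → X, W s' * |emp s' y - (∑ i, Q i y) / N|
      ≤ ∑ y, Real.sqrt ((∑ i, Q i y) / (N:ℝ) ^ 2) :=
        Finset.sum_le_sum fun y _ => hstep y
    _ ≤ Real.sqrt ((Fintype.card X : ℝ) * ∑ y, (∑ i, Q i y) / (N:ℝ) ^ 2) :=
        sum_sqrt_le _ hQnn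
    _ = Real.sqrt ((Fintype.card X : ℝ) / N) := by
        congr 1
        rw [← Finset.sum_div, Finset.sum_comm]
        simp only [hQ1, Finset.sum_const, Finset.card_univ, Fintype.card_fin, nsmul_eq_mul,
          mul_one]
        field_simp
    _ = Real.sqrt (Fintype.card X) / Real.sqrt N :=
        Real.sqrt_div (Nat.cast_nonneg _) _

set_option maxHeartbeats 2000000 in
/-- Lemma 8: one-step propagation bound when the transition kernel does not depend on the
action distribution.  Conditioned on the joint state `x`, agents sample actions
independently via `π` and next states independently via `P`; the expected L1 distance
between the next empirical state distribution and `P^MF(emp x, π)` is at most `2√|X|/√N`.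
The expectation is written out as a sum over joint actions and joint next states weighted
by the product law.  No Lipschitz assumption on `P` is needed. -/
theorem empirical_state_update_bound_action_independent
    {X U : Type*} [Fintype X] [Fintype U] [DecidableEq X] [DecidableEq U]
    (N : ℕ) (hN : 0 < N)
    (P : X → U → (X → ℝ) → X → ℝ)
    (hP : ∀ x u μ, IsPmf μ → IsPmf (P x u μ))
    (π : X → (X → ℝ) → U → ℝ)
    (hπ : ∀ x μ, IsPmf μ → IsPmf (π x μ))
    (x : Fin N → X) :
    ∑ a : Fin N → U, ∑ s' : Fin N → X,
        ((∏ i, π (x i) (emp x) (a i)) * ∏ i, P (x i) (a i) (emp x) (s' i)) *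
          l1 (fun y => emp s' y - PMFind P (emp x) π y)
      ≤ 2 * Real.sqrt (Fintype.card X) / Real.sqrt N := by
  have hNR : (0:ℝ) < N := by exact_mod_cast hN
  have key : ∀ f : X → ℝ, ∑ xv, f xv * emp x xv = (∑ i, f (x i)) / N := by
    intro f
    simp only [emp]
    calc ∑ xv, f xv * ((∑ i, if x i = xv then (1:ℝ) else 0) / N)
        = ∑ xv, ∑ i, (if x i = xv then f xv / N else 0) := by
          refine Finset.sum_congr rfl fun xv _ => ?_
          rw [Finset.sum_div, Finset.mul_sum]
          refine Finset.sum_congr rfl fun i _ => ?_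
          split <;> simp [div_eq_mul_inv]
      _ = ∑ i, ∑ xv, (if x i = xv then f xv / N else 0) := Finset.sum_comm
      _ = ∑ i, f (x i) / N := by
          refine Finset.sum_congr rfl fun i _ => ?_
          simp [Finset.sum_ite_eq]
      _ = (∑ i, f (x i)) / N := by rw [Finset.sum_div]
  have hμ : IsPmf (emp x) := by
    constructor
    · intro xv
      apply div_nonneg _ (Nat.cast_nonneg _)
      exact Finset.sum_nonneg fun i _ => by split <;> norm_num
    · have := key (fun _ => 1)
      simp only [one_mul] at this
      rw [this]
      simp
      simp [hNR.ne', hN.ne']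
  set Q : Fin N → X → ℝ := fun i y => ∑ u, π (x i) (emp x) u * P (x i) u (emp x) y
    with hQdef
  have hQ0 : ∀ i y, 0 ≤ Q i y := fun i y =>
    Finset.sum_nonneg fun u _ =>
      mul_nonneg ((hπ (x i) (emp x) hμ).1 u) ((hP (x i) u (emp x) hμ).1 y)
  have hQ1 : ∀ i, ∑ y, Q i y = 1 := by
    intro i
    simp only [hQdef]
    rw [Finset.sum_comm]
    calc ∑ u, ∑ y, π (x i) (emp x) u * P (x i) u (emp x) y
        = ∑ u, π (x i) (emp x) u * ∑ y, P (x i) u (emp x) y := by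
          refine Finset.sum_congr rfl fun u _ => ?_
          rw [Finset.mul_sum]
      _ = ∑ u, π (x i) (emp x) u := by
          refine Finset.sum_congr rfl fun u _ => ?_
          rw [(hP (x i) u (emp x) hμ).2, mul_one]
      _ = 1 := (hπ (x i) (emp x) hμ).2
  have hm : ∀ y, PMFind P (emp x) π y = (∑ i, Q i y) / N := by
    intro y
    show ∑ xv, ∑ u, P xv u (emp x) y * π xv (emp x) u * emp x xv = _
    have h1 : ∀ xv, ∑ u, P xv u (emp x) y * π xv (emp x) u * emp x xv
        = (∑ u, P xv u (emp x) y * π xv (emp x) u) * emp x xv := by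
      intro xv; rw [Finset.sum_mul]
    rw [Finset.sum_congr rfl fun xv _ => h1 xv,
      key (fun xv => ∑ u, P xv u (emp x) y * π xv (emp x) u)]
    congr 1
    refine Finset.sum_congr rfl fun i _ => ?_
    simp only [hQdef]
    exact Finset.sum_congr rfl fun u _ => mul_comm _ _
  have step1 : ∑ a : Fin N → U, ∑ s' : Fin N → X,
        ((∏ i, π (x i) (emp x) (a i)) * ∏ i, P (x i) (a i) (emp x) (s' i)) *
          l1 (fun y => emp s' y - PMFind P (emp x) π y)
      = ∑ s' : Fin N → X, (∏ i, Q i (s' i)) *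
          (∑ y, |emp s' y - (∑ i, Q i y) / N|) := by
    rw [Finset.sum_comm]
    refine Finset.sum_congr rfl fun s' _ => ?_
    rw [← Finset.sum_mul]
    have hL : l1 (fun y => emp s' y - PMFind P (emp x) π y)
        = ∑ y, |emp s' y - (∑ i, Q i y) / N| := by
      simp only [l1]
      exact Finset.sum_congr rfl fun y _ => by rw [hm y]
    rw [hL]
    congr 1
    calc ∑ a : Fin N → U, (∏ i, π (x i) (emp x) (a i)) * ∏ i, P (x i) (a i) (emp x) (s' i)
        = ∑ a : Fin N → U, ∏ i, (π (x i) (emp x) (a i) * P (x i) (a i) (emp x) (s' i)) :=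
          Finset.sum_congr rfl fun a _ => (Finset.prod_mul_distrib).symm
      _ = ∏ i, ∑ u, π (x i) (emp x) u * P (x i) u (emp x) (s' i) :=
          sum_pi_prod (fun i u => π (x i) (emp x) u * P (x i) u (emp x) (s' i))
      _ = ∏ i, Q i (s' i) := rfl
  rw [step1]
  refine (prob_bound N hN Q hQ0 hQ1).trans ?_
  have h1 : 0 ≤ Real.sqrt (Fintype.card X) / Real.sqrt N := by positivity
  rw [mul_div_assoc, two_mul]
  linarith
end
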